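/- Let n, k ≥ 1 be natural numbers and p ∈ (0,1). The average number of boys B(n,k,p) = Σ_{ℓ=n+k-1}^∞ n C(ℓ, n-1) p^n (1-p)^{ℓ+1-n} + Σ_{ℓ=n+k-1}^∞ (ℓ+1-k) C(ℓ, k-1) p^{ℓ+1-k} (1-p)^k admits the closed form B(n,k,p) = (n/(n-1)!) p^n (−1)^{n-1} d^{n-1}/dp^{n-1} ( (1-p)^{n+k-1}/p ) + (p (1-p)^k/(k-1)!) d^{k}/dp^{k} ( p^{n+k-1}/(1-p) ). -/

import Mathlib

open scoped Nat

lemma geomTail_hasSum (N : ℕ) {x : ℝ} (hx : |x| < 1) :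
    HasSum (fun j : ℕ => x ^ (N + j)) (x ^ N / (1 - x)) := by
  have h := (hasSum_geometric_of_norm_lt_one
      (by rwa [Real.norm_eq_abs] : ‖x‖ < 1)).mul_left (x ^ N)
  simpa [pow_add, div_eq_mul_inv] using h

lemma iteratedDeriv_geomTail (N : ℕ) :
    ∀ m : ℕ, m ≤ N → ∀ x : ℝ, |x| < 1 →
      iteratedDeriv m (fun q : ℝ => q ^ N / (1 - q)) x
        = ∑' j : ℕ, ((N + j).descFactorial m : ℝ) * x ^ (N + j - m) := by
  intro m
  induction m with
  | zero =>
    intro _ x hx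
    simpa using ((geomTail_hasSum N hx).tsum_eq).symm
  | succ m ih =>
    intro hm x hx
    have hmN : m ≤ N := Nat.le_of_succ_le hm
    set r : ℝ := (|x| + 1) / 2 with hr
    have hr0 : 0 < r := by positivity
    have hr1 : r < 1 := by rw [hr]; linarith [hx]
    have hxr : |x| < r := by rw [hr]; linarith [hx]
    -- term functions and their derivatives
    set g : ℕ → ℝ → ℝ := fun j y => ((N + j).descFactorial m : ℝ) * y ^ (N + j - m) with hgdef
    set g' : ℕ → ℝ → ℝ :=
      fun j y => ((N + j).descFactorial (m + 1) : ℝ) * y ^ (N + j - (m + 1)) with hg'def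
    set u : ℕ → ℝ := fun j => (r ^ (m + 1))⁻¹ * (((N + j : ℕ) : ℝ) ^ (m + 1) * r ^ (N + j))
      with hudef
    have hu : Summable u := by
      have h1 : Summable (fun ℓ : ℕ => (ℓ : ℝ) ^ (m + 1) * r ^ ℓ) :=
        summable_pow_mul_geometric_of_norm_lt_one (m + 1)
          (by rw [Real.norm_eq_abs, abs_of_pos hr0]; exact hr1)
      have h2 := h1.comp_injective (add_right_injective N)
      exact (h2.mul_left ((r ^ (m + 1))⁻¹)).congr fun j => rfl
    have hderiv : ∀ j : ℕ, ∀ y : ℝ, y ∈ Set.Ioo (-r) r → HasDerivAt (g j) (g' j y) y := by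
      intro j y _
      have h := (hasDerivAt_pow (N + j - m) y).const_mul ((N + j).descFactorial m : ℝ)
      refine h.congr_deriv ?_
      have e1 : N + j - m - 1 = N + j - (m + 1) := by omega
      have e2 : (N + j).descFactorial (m + 1) = (N + j - m) * (N + j).descFactorial m :=
        Nat.descFactorial_succ (N + j) m
      rw [hg'def]
      simp only [e1.symm, e2]
      push_cast
      ring
    have hbound : ∀ j : ℕ, ∀ y : ℝ, y ∈ Set.Ioo (-r) r → ‖g' j y‖ ≤ u j := by
      intro j y hy
      have hyr : |y| ≤ r := by
        rw [abs_le]; exact ⟨hy.1.le, hy.2.le⟩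
      have e3 : (m + 1) + (N + j - (m + 1)) = N + j := by omega
      have hu_eq : u j = ((N + j : ℕ) : ℝ) ^ (m + 1) * r ^ (N + j - (m + 1)) := by
        have hru : r ^ (N + j) = r ^ (m + 1) * r ^ (N + j - (m + 1)) := by
          rw [← pow_add]; congr 1; omega
        have hrne : r ^ (m + 1) ≠ 0 := by positivity
        simp only [hudef]
        rw [hru]
        field_simp
      rw [hu_eq, hg'def]
      have h1 : ‖((N + j).descFactorial (m + 1) : ℝ) * y ^ (N + j - (m + 1))‖
          = ((N + j).descFactorial (m + 1) : ℝ) * |y| ^ (N + j - (m + 1)) := by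
        rw [norm_mul, Real.norm_eq_abs, Real.norm_eq_abs, abs_pow,
          abs_of_nonneg (by positivity : (0:ℝ) ≤ ((N + j).descFactorial (m + 1) : ℝ))]
      rw [h1]
      have h2 : ((N + j).descFactorial (m + 1) : ℝ) ≤ ((N + j : ℕ) : ℝ) ^ (m + 1) := by
        exact_mod_cast Nat.descFactorial_le_pow (N + j) (m + 1)
      exact mul_le_mul h2 (pow_le_pow_left₀ (abs_nonneg y) hyr _)
        (by positivity) (by positivity)
    have hg0 : Summable (fun j => g j (0 : ℝ)) := by
      have : (fun j : ℕ => g j (0 : ℝ)) = fun _ => (0 : ℝ) := by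
        funext j
        have : N + j - m ≠ 0 := by omega
        simp [hgdef, zero_pow this]
      rw [this]; exact summable_zero
    have hx_mem : x ∈ Set.Ioo (-r) r := by
      constructor <;> [linarith [neg_abs_le x, hxr]; linarith [le_abs_self x, hxr]]
    have h0_mem : (0 : ℝ) ∈ Set.Ioo (-r) r := by constructor <;> simp [hr0, hr0.le] <;> linarith
    have hF : HasDerivAt (fun z => ∑' j, g j z) (∑' j, g' j x) x :=
      hasDerivAt_tsum_of_isPreconnected hu isOpen_Ioo (isPreconnected_Ioo)
        hderiv hbound h0_mem hg0 hx_mem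
    have heq : iteratedDeriv m (fun q : ℝ => q ^ N / (1 - q)) =ᶠ[nhds x]
        fun z => ∑' j, g j z := by
      filter_upwards [isOpen_Ioo.mem_nhds (abs_lt.mp hx : x ∈ Set.Ioo (-1 : ℝ) 1)] with y hy
      exact ih hmN y (abs_lt.mpr ⟨hy.1, hy.2⟩)
    rw [iteratedDeriv_succ, heq.deriv_eq, hF.deriv]

lemma iteratedDeriv_comp_one_sub (f : ℝ → ℝ) (m : ℕ) (x : ℝ) :
    iteratedDeriv m (fun q => f (1 - q)) x = (-1 : ℝ) ^ m * iteratedDeriv m f (1 - x) := by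
  induction m generalizing x with
  | zero => simp
  | succ m ih =>
    have hIH : iteratedDeriv m (fun q => f (1 - q))
        = fun y => (-1 : ℝ) ^ m * iteratedDeriv m f (1 - y) := funext ih
    rw [iteratedDeriv_succ, hIH, deriv_const_mul_field, deriv_comp_const_sub,
      iteratedDeriv_succ]
    ring

noncomputable def avgBoys (n k : ℕ) (p : ℝ) : ℝ :=
  (∑' j : ℕ, (n : ℝ) * ((n + k - 1 + j).choose (n - 1) : ℝ) *
      p ^ n * (1 - p) ^ (n + k - 1 + j + 1 - n)) +
  ∑' j : ℕ, ((n + k - 1 + j + 1 - k : ℕ) : ℝ) * ((n + k - 1 + j).choose (k - 1) : ℝ) *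
      p ^ (n + k - 1 + j + 1 - k) * (1 - p) ^ k

theorem avgBoys_closed_form (n k : ℕ) (hn : 1 ≤ n) (hk : 1 ≤ k)
    (p : ℝ) (hp : p ∈ Set.Ioo (0 : ℝ) 1) :
    avgBoys n k p =
      ((n : ℝ) / (Nat.factorial (n - 1) : ℝ)) * p ^ n * (-1 : ℝ) ^ (n - 1) *
        iteratedDeriv (n - 1) (fun q : ℝ => (1 - q) ^ (n + k - 1) / q) p +
      (p * (1 - p) ^ k / (Nat.factorial (k - 1) : ℝ)) *
        iteratedDeriv k (fun q : ℝ => q ^ (n + k - 1) / (1 - q)) p := by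
  obtain ⟨a, rfl⟩ : ∃ a, n = a + 1 := ⟨n - 1, by omega⟩
  obtain ⟨b, rfl⟩ : ∃ b, k = b + 1 := ⟨k - 1, by omega⟩
  obtain ⟨hp0, hp1⟩ := hp
  have hp' : |p| < 1 := by rw [abs_lt]; constructor <;> linarith
  have hq' : |1 - p| < 1 := by rw [abs_lt]; constructor <;> linarith
  have hN1 : a + 1 + (b + 1) - 1 = a + b + 1 := by omega
  have e1 : ∀ j : ℕ, a + b + 1 + j + 1 - (a + 1) = b + 1 + j := fun j => by omega
  have e2 : ∀ j : ℕ, a + b + 1 + j + 1 - (b + 1) = a + 1 + j := fun j => by omega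
  have e3 : ∀ j : ℕ, a + b + 1 + j - a = b + 1 + j := fun j => by omega
  have e4 : ∀ j : ℕ, a + b + 1 + j - (b + 1) = a + j := fun j => by omega
  rw [avgBoys]
  simp only [hN1, Nat.add_sub_cancel, e1, e2]
  congr 1
  · -- first summand
    have hcomp : iteratedDeriv a (fun q : ℝ => (1 - q) ^ (a + b + 1) / q) p
        = (-1 : ℝ) ^ a * iteratedDeriv a (fun y : ℝ => y ^ (a + b + 1) / (1 - y)) (1 - p) := by
      rw [show (fun q : ℝ => (1 - q) ^ (a + b + 1) / q)
          = fun q : ℝ => (1 - q) ^ (a + b + 1) / (1 - (1 - q)) from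
        funext fun q => by rw [sub_sub_cancel]]
      exact iteratedDeriv_comp_one_sub (fun y : ℝ => y ^ (a + b + 1) / (1 - y)) a p
    rw [hcomp, iteratedDeriv_geomTail (a + b + 1) a (by omega) (1 - p) hq']
    simp only [e3]
    set T : ℝ := ∑' j : ℕ, ((a + b + 1 + j).descFactorial a : ℝ) * (1 - p) ^ (b + 1 + j)
      with hT
    have hterm1 : ∀ j : ℕ,
        ((a + 1 : ℕ) : ℝ) * ((a + b + 1 + j).choose a : ℝ) * p ^ (a + 1)
            * (1 - p) ^ (b + 1 + j)
          = ((a + 1 : ℕ) : ℝ) / (a ! : ℝ) * p ^ (a + 1)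
            * (((a + b + 1 + j).descFactorial a : ℝ) * (1 - p) ^ (b + 1 + j)) := by
      intro j
      rw [Nat.descFactorial_eq_factorial_mul_choose]
      have ha0 : (a ! : ℝ) ≠ 0 := by positivity
      push_cast
      field_simp
    have h1 : (∑' j : ℕ, ((a + 1 : ℕ) : ℝ) * ((a + b + 1 + j).choose a : ℝ) * p ^ (a + 1)
          * (1 - p) ^ (b + 1 + j))
        = ((a + 1 : ℕ) : ℝ) / (a ! : ℝ) * p ^ (a + 1) * T := by
      rw [hT, ← tsum_mul_left]
      exact tsum_congr hterm1
    have hsq : (-1 : ℝ) ^ a * (-1 : ℝ) ^ a = 1 := by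
      rw [← pow_add]; exact Even.neg_one_pow ⟨a, rfl⟩
    rw [h1]
    linear_combination (-(((a + 1 : ℕ) : ℝ) / (a ! : ℝ) * p ^ (a + 1) * T)) * hsq
  · -- second summand
    rw [iteratedDeriv_geomTail (a + b + 1) (b + 1) (by omega) p hp']
    simp only [e4]
    have hterm2 : ∀ j : ℕ,
        ((a + 1 + j : ℕ) : ℝ) * ((a + b + 1 + j).choose b : ℝ) * p ^ (a + 1 + j)
            * (1 - p) ^ (b + 1)
          = p * (1 - p) ^ (b + 1) / (b ! : ℝ)
            * (((a + b + 1 + j).descFactorial (b + 1) : ℝ) * p ^ (a + j)) := by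
      intro j
      have hcb : (a + b + 1 + j).choose (b + 1) * (b + 1)
          = (a + b + 1 + j).choose b * (a + 1 + j) := by
        rw [Nat.choose_succ_right_eq]; congr 1; omega
      have hd : (a + b + 1 + j).descFactorial (b + 1)
          = b ! * ((a + b + 1 + j).choose b * (a + 1 + j)) := by
        rw [Nat.descFactorial_eq_factorial_mul_choose, Nat.factorial_succ, ← hcb]
        ring
      rw [hd]
      have hb0 : (b ! : ℝ) ≠ 0 := by positivity
      push_cast
      field_simp
      ring
    rw [← tsum_mul_left]
    exact tsum_congr hterm2
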